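/- Define g(s,t) as: g(s,t) = s if t ≥ s/p; g(s,t) = (1/(1-p))·(2√(pst) - p(t+s)) if ps ≤ t < s/p; g(s,t) = t if t ≤ ps, where 0 < p < 1. Then g is concave on [0,∞)². -/

import Mathlib

/-- g is below every supporting linear function h_l. -/
lemma aux_le (p : ℝ) (hp : 0 < p) (hp1 : p < 1) (l s t : ℝ)
    (hl1 : 1 ≤ l) (hl2 : l ≤ 1/p) (hs : 0 ≤ s) (ht : 0 ≤ t) :
    (if s ≤ p * t then s else if p * s ≤ t then
        (1/(1-p)) * (2*Real.sqrt (p*s*t) - p*(t+s)) else t)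
      ≤ (1/(1-p)) * ((l*p - p)*s + (1/l - p)*t) := by
  have hc : (0:ℝ) < 1 - p := by linarith
  have hl0 : (0:ℝ) < l := lt_of_lt_of_le one_pos hl1
  have hlp : l * p ≤ 1 := (le_div_iff₀ hp).mp hl2
  split_ifs with h1 h2
  · -- s ≤ p*t, value = s
    have hls : l * s ≤ t := by
      have h1' : s / p ≤ t := by
        rw [div_le_iff₀ hp]; nlinarith
      calc l * s ≤ (1/p) * s := by
            apply mul_le_mul_of_nonneg_right hl2 hs
        _ = s / p := by ring
        _ ≤ t := h1'
    have key : (l*p - p)*s + (1/l - p)*t - (1-p)*s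
        = (1/l) * ((1 - l*p) * (t - l*s)) := by
      field_simp
      ring
    have hnn : 0 ≤ (1/l) * ((1 - l*p) * (t - l*s)) := by
      apply mul_nonneg (by positivity)
      apply mul_nonneg (by linarith) (by linarith)
    calc s = (1/(1-p)) * ((1-p)*s) := by field_simp
      _ ≤ (1/(1-p)) * ((l*p - p)*s + (1/l - p)*t) := by
          apply mul_le_mul_of_nonneg_left _ (by positivity)
          linarith [key ▸ hnn]
  · -- middle: value = (1/(1-p))(2√(pst) - p(t+s))
    apply mul_le_mul_of_nonneg_left _ (le_of_lt (by positivity : (0:ℝ) < 1/(1-p)))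
    have hA : (0:ℝ) ≤ l*p*s := by positivity
    have hB : (0:ℝ) ≤ t/l := by positivity
    have hAB : (l*p*s) * (t/l) = p*s*t := by field_simp
    have hsqrt : Real.sqrt (p*s*t) = Real.sqrt (l*p*s) * Real.sqrt (t/l) := by
      rw [← Real.sqrt_mul hA, hAB]
    have h2 : 2 * Real.sqrt (p*s*t) ≤ l*p*s + t/l := by
      rw [hsqrt]
      nlinarith [sq_nonneg (Real.sqrt (l*p*s) - Real.sqrt (t/l)),
        Real.sq_sqrt hA, Real.sq_sqrt hB]
    have hexp : (l*p - p)*s + (1/l - p)*t = l*p*s + t/l - p*(t+s) := by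
      field_simp; ring
    linarith [h2, hexp.le, hexp.ge]
  · -- t < p*s, value = t
    have hts : t ≤ l * (p * s) := by
      have : t ≤ p * s := le_of_lt (lt_of_not_ge h2)
      nlinarith
    have key : (l*p - p)*s + (1/l - p)*t - (1-p)*t
        = (1/l) * ((l - 1) * (l*(p*s) - t)) := by
      field_simp
      ring
    have hnn : 0 ≤ (1/l) * ((l - 1) * (l*(p*s) - t)) := by
      apply mul_nonneg (by positivity)
      apply mul_nonneg (by linarith) (by linarith)
    calc t = (1/(1-p)) * ((1-p)*t) := by field_simp
      _ ≤ (1/(1-p)) * ((l*p - p)*s + (1/l - p)*t) := by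
          apply mul_le_mul_of_nonneg_left _ (by positivity)
          linarith [key ▸ hnn]

/-- g is attained by some supporting linear function h_l. -/
lemma aux_ex (p : ℝ) (hp : 0 < p) (hp1 : p < 1) (s t : ℝ) (hs : 0 ≤ s) (ht : 0 ≤ t) :
    ∃ l, 1 ≤ l ∧ l ≤ 1/p ∧
      (if s ≤ p * t then s else if p * s ≤ t then
          (1/(1-p)) * (2*Real.sqrt (p*s*t) - p*(t+s)) else t)
        = (1/(1-p)) * ((l*p - p)*s + (1/l - p)*t) := by
  have hc : (0:ℝ) < 1 - p := by linarith
  have hp0 : p ≠ 0 := ne_of_gt hp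
  split_ifs with h1 h2
  · refine ⟨1/p, ?_, le_refl _, ?_⟩
    · rw [le_div_iff₀ hp]; linarith
    · field_simp; ring
  · -- middle case, l = √(t/(p s))
    have hpt : p * t < s := lt_of_not_ge h1
    have hs0 : 0 < s := by nlinarith
    have ht0 : 0 < t := by nlinarith
    set l := Real.sqrt (t/(p*s)) with hl
    have hratio : (0:ℝ) < t/(p*s) := by positivity
    have hl0 : 0 < l := Real.sqrt_pos.mpr hratio
    have hl1 : 1 ≤ l := by
      rw [hl, show (1:ℝ) = Real.sqrt 1 by simp]
      apply Real.sqrt_le_sqrt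
      rw [le_div_iff₀ (by positivity)]; linarith
    have hl2 : l ≤ 1/p := by
      have hratle : t/(p*s) ≤ (1/p)^2 := by
        rw [div_le_iff₀ (by positivity : (0:ℝ) < p*s), div_pow, one_pow,
          div_mul_eq_mul_div, le_div_iff₀ (by positivity : (0:ℝ) < p^2)]
        nlinarith
      calc l = Real.sqrt (t/(p*s)) := hl
        _ ≤ Real.sqrt ((1/p)^2) := Real.sqrt_le_sqrt hratle
        _ = 1/p := Real.sqrt_sq (by positivity)
    have hlsq : l^2 = t/(p*s) := Real.sq_sqrt (le_of_lt hratio)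
    have key1 : l * (p*s) = Real.sqrt (p*s*t) := by
      have h1' : Real.sqrt ((p*s)^2) = (p*s) := Real.sqrt_sq (by positivity)
      calc l * (p*s) = Real.sqrt (t/(p*s)) * Real.sqrt ((p*s)^2) := by
            rw [hl, h1']
        _ = Real.sqrt (t/(p*s) * (p*s)^2) := (Real.sqrt_mul (le_of_lt hratio) _).symm
        _ = Real.sqrt (p*s*t) := by congr 1; field_simp
    have h2' : l * Real.sqrt (p*s*t) = t := by
      rw [hl, ← Real.sqrt_mul (le_of_lt hratio)]
      rw [show t/(p*s)*(p*s*t) = t^2 by field_simp]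
      exact Real.sqrt_sq ht
    have key2 : t/l = Real.sqrt (p*s*t) := by
      rw [div_eq_iff (ne_of_gt hl0)]
      linarith [h2']
    refine ⟨l, hl1, hl2, ?_⟩
    have : 2 * Real.sqrt (p*s*t) = l*p*s + t/l := by
      rw [key2, show l*p*s = l*(p*s) by ring, key1]; ring
    have hexp : (l*p - p)*s + (1/l - p)*t = l*p*s + t/l - p*(t+s) := by
      field_simp
      ring
    rw [hexp, ← this]
  · refine ⟨1, le_refl _, by rw [le_div_iff₀ hp]; linarith, ?_⟩
    field_simp; ring

/-- Concavity of the shape function of the discrete Hammersley process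
with Bernoulli(p) bulk weights. -/
theorem stmt7 (p : ℝ) (hp : 0 < p) (hp1 : p < 1) (g : ℝ → ℝ → ℝ)
    (hg : ∀ s t : ℝ, 0 ≤ s → 0 ≤ t →
      g s t = if s ≤ p * t then s
        else if p * s ≤ t then (1/(1-p)) * (2*Real.sqrt (p*s*t) - p*(t+s))
        else t) :
    ConcaveOn ℝ (Set.Ici 0 ×ˢ Set.Ici 0) (fun q : ℝ × ℝ => g q.1 q.2) := by
  constructor
  · exact (convex_Ici 0).prod (convex_Ici 0)
  · rintro ⟨s1, t1⟩ hx ⟨s2, t2⟩ hy a b ha hb hab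
    obtain ⟨hs1, ht1⟩ := hx
    obtain ⟨hs2, ht2⟩ := hy
    simp only [Set.mem_Ici] at hs1 ht1 hs2 ht2
    have hs0 : 0 ≤ a*s1 + b*s2 := by positivity
    have ht0 : 0 ≤ a*t1 + b*t2 := by positivity
    obtain ⟨l, hl1, hl2, heq⟩ := aux_ex p hp hp1 (a*s1 + b*s2) (a*t1 + b*t2) hs0 ht0
    have hle1 := aux_le p hp hp1 l s1 t1 hl1 hl2 hs1 ht1
    have hle2 := aux_le p hp hp1 l s2 t2 hl1 hl2 hs2 ht2
    simp only [Prod.smul_mk, Prod.mk_add_mk, smul_eq_mul]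
    rw [hg s1 t1 hs1 ht1, hg s2 t2 hs2 ht2,
      hg (a*s1 + b*s2) (a*t1 + b*t2) hs0 ht0, heq]
    have step1 : a * (if s1 ≤ p * t1 then s1 else if p * s1 ≤ t1 then
        (1/(1-p)) * (2*Real.sqrt (p*s1*t1) - p*(t1+s1)) else t1)
        ≤ a * ((1/(1-p)) * ((l*p - p)*s1 + (1/l - p)*t1)) :=
      mul_le_mul_of_nonneg_left hle1 ha
    have step2 : b * (if s2 ≤ p * t2 then s2 else if p * s2 ≤ t2 then
        (1/(1-p)) * (2*Real.sqrt (p*s2*t2) - p*(t2+s2)) else t2)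
        ≤ b * ((1/(1-p)) * ((l*p - p)*s2 + (1/l - p)*t2)) :=
      mul_le_mul_of_nonneg_left hle2 hb
    have hlin : a * ((1/(1-p)) * ((l*p - p)*s1 + (1/l - p)*t1))
        + b * ((1/(1-p)) * ((l*p - p)*s2 + (1/l - p)*t2))
        = (1/(1-p)) * ((l*p - p)*(a*s1 + b*s2) + (1/l - p)*(a*t1 + b*t2)) := by
      ring
    linarith [step1, step2, hlin.le, hlin.ge]
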